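/- arXiv:1810.04536 — 2 statements merged into one kernel-verified Lean document; each statement's English description precedes it below -/
import Mathlib

section
/- With notation as in the standard-form Groebner basis construction for a binary [n,k,d]-code C correcting t errors, and a received word v with at most t errors: the remainder of X^v − 1 on division by the reduced Groebner basis G has weight more than t if and only if at least one nonzero coordinate of the error vector lies among the first k coordinates of v. -/
open MvPolynomial
open scoped MonomialOrder

/-- The leading (multidegree) exponent of a polynomial with respect to a monomial order. -/
noncomputable def leadExp {σ K : Type*} [Field K] (m : MonomialOrder σ)
    (f : MvPolynomial σ K) : σ →₀ ℕ :=
  m.toSyn.symm (f.support.sup fun d => m.toSyn d)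

/-- The leading term of a polynomial with respect to a monomial order. -/
noncomputable def leadTerm {σ K : Type*} [Field K] (m : MonomialOrder σ)
    (f : MvPolynomial σ K) : MvPolynomial σ K :=
  monomial (leadExp m f) (f.coeff (leadExp m f))

/-- `G` is a Groebner basis of the ideal `I` for the monomial order `m`. -/
def IsGroebnerBasis {σ K : Type*} [Field K] (m : MonomialOrder σ)
    (I : Ideal (MvPolynomial σ K)) (G : Set (MvPolynomial σ K)) : Prop :=
  G.Finite ∧ G ⊆ (I : Set (MvPolynomial σ K)) ∧
    Ideal.span (leadTerm m '' G) = Ideal.span (leadTerm m '' {f | f ∈ I ∧ f ≠ 0})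

/-- A reduced Groebner basis: all elements monic, and no monomial of an element lies in
the ideal generated by the leading terms of the other elements. -/
def IsReducedGB {σ K : Type*} [Field K] (m : MonomialOrder σ)
    (G : Set (MvPolynomial σ K)) : Prop :=
  ∀ p ∈ G, p.coeff (leadExp m p) = 1 ∧
    ∀ c ∈ p.support, (monomial c (1 : K)) ∉ Ideal.span (leadTerm m '' (G \ {p}))

/-- `r` is a remainder of `f` on division by `G` (relative to the ideal `I`):
`f - r ∈ I` and no monomial of `r` is divisible by the leading monomial
of any nonzero element of `G`. -/
def IsRemainder {σ K : Type*} [Field K] (m : MonomialOrder σ)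
    (I : Ideal (MvPolynomial σ K)) (G : Set (MvPolynomial σ K))
    (f r : MvPolynomial σ K) : Prop :=
  f - r ∈ I ∧ ∀ c ∈ r.support, ∀ g ∈ G, g ≠ 0 → ¬ leadExp m g ≤ c

/-- The exponent vector in `ℕ^n` associated with a binary word. -/
noncomputable def expOf {n : ℕ} (c : Fin n → ZMod 2) : Fin n →₀ ℕ :=
  Finsupp.equivFunOnFinite.symm fun i => (c i).val

/-- The monomial `X^c` associated with a binary word `c`. -/
noncomputable def Xw (K : Type*) [Field K] {n : ℕ} (c : Fin n → ZMod 2) :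
    MvPolynomial (Fin n) K :=
  monomial (expOf c) 1

/-- The code ideal `I_C = ⟨X^c − X^{c'} : c − c' ∈ C⟩ + ⟨X_i^2 − 1 : 1 ≤ i ≤ n⟩`. -/
noncomputable def codeIdeal (K : Type*) [Field K] {n : ℕ}
    (C : Submodule (ZMod 2) (Fin n → ZMod 2)) : Ideal (MvPolynomial (Fin n) K) :=
  Ideal.span ({f | ∃ c c' : Fin n → ZMod 2, c - c' ∈ C ∧ f = Xw K c - Xw K c'} ∪
    {f | ∃ i : Fin n, f = X i ^ 2 - 1})

/-- `g` is a generating matrix in standard form `(I_k | M)` for the code `C`: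
its rows span `C` and its first `k` columns form the identity matrix. -/
def IsStandardGenMatrix {n k : ℕ} (hk : k ≤ n) (C : Submodule (ZMod 2) (Fin n → ZMod 2))
    (g : Fin k → Fin n → ZMod 2) : Prop :=
  C = Submodule.span (ZMod 2) (Set.range g) ∧
    ∀ i j : Fin k, g i (Fin.castLE hk j) = if i = j then 1 else 0

/-- The word `m_i = (0,…,0, g_{i,k+1},…,g_{i,n})` built from the `i`-th row of `g`. -/
def mrow {n k : ℕ} (g : Fin k → Fin n → ZMod 2) (i : Fin k) : Fin n → ZMod 2 :=
  fun j => if (j : ℕ) < k then 0 else g i j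

/-- The set `{X_i − X^{m_i} : 1 ≤ i ≤ k} ∪ {X_j^2 − 1 : k+1 ≤ j ≤ n}`. -/
noncomputable def gbSet (K : Type*) [Field K] {n k : ℕ} (hk : k ≤ n)
    (g : Fin k → Fin n → ZMod 2) : Set (MvPolynomial (Fin n) K) :=
  (Set.range fun i : Fin k => X (Fin.castLE hk i) - Xw K (mrow g i)) ∪
    {f | ∃ j : Fin n, k ≤ (j : ℕ) ∧ f = X j ^ 2 - 1}


/-! ### Auxiliary lemmas -/

open Finsupp in
lemma prod_single_pow' {K : Type*} [Field K] {ι Q : Type*} [AddCommMonoid Q]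
    (s : Finset ι) (q : ι → Q) (u : ι → ℕ) :
    ∏ i ∈ s, (AddMonoidAlgebra.single (q i) (1 : K)) ^ (u i)
      = AddMonoidAlgebra.single (∑ i ∈ s, u i • q i) 1 := by
  classical
  induction s using Finset.induction with
  | empty => simp [AddMonoidAlgebra.one_def]
  | insert _ _ h ih =>
      rw [Finset.prod_insert h, ih, Finset.sum_insert h, AddMonoidAlgebra.single_pow, one_pow,
        AddMonoidAlgebra.single_mul_single, one_mul]

/-- Evaluation into the group algebra of the quotient group. -/
noncomputable def phiC (K : Type*) [Field K] {n : ℕ} (C : Submodule (ZMod 2) (Fin n → ZMod 2)) :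
    MvPolynomial (Fin n) K →ₐ[K] AddMonoidAlgebra K ((Fin n → ZMod 2) ⧸ C) :=
  aeval fun i => AddMonoidAlgebra.single (Submodule.Quotient.mk (Pi.single i (1 : ZMod 2))) 1

lemma phiC_Xw {K : Type*} [Field K] {n : ℕ} (C : Submodule (ZMod 2) (Fin n → ZMod 2))
    (a : Fin n → ZMod 2) :
    phiC K C (Xw K a) = AddMonoidAlgebra.single (Submodule.Quotient.mk a) 1 := by
  rw [Xw, expOf, phiC, aeval_monomial, map_one, one_mul]
  rw [Finsupp.prod_of_support_subset _ (Finset.subset_univ _) _ (fun i _ => pow_zero _)]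
  rw [prod_single_pow']
  congr 1
  have h1 : ∀ i : Fin n,
      ((Finsupp.equivFunOnFinite.symm fun i => (a i).val) i)
        • (Submodule.Quotient.mk (Pi.single i (1 : ZMod 2)) : (Fin n → ZMod 2) ⧸ C)
      = Submodule.Quotient.mk ((a i).val • Pi.single i (1 : ZMod 2)) := by
    intro i
    rw [← Submodule.mkQ_apply, ← map_nsmul, Submodule.mkQ_apply]
    rfl
  simp_rw [h1]
  have h3 : ∀ x : Fin n, (Submodule.Quotient.mk ((a x).val • Pi.single x (1 : ZMod 2)) :
      (Fin n → ZMod 2) ⧸ C) = Submodule.mkQ C ((a x).val • Pi.single x 1) := fun _ => rfl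
  simp_rw [h3]
  rw [← map_sum (Submodule.mkQ C)]
  rw [Submodule.mkQ_apply]
  congr 1
  have h2 : ∀ i : Fin n,
      ((a i).val • Pi.single i (1 : ZMod 2) : Fin n → ZMod 2) = Pi.single i (a i) := by
    intro i
    funext j
    rw [Pi.smul_apply]
    by_cases hij : j = i
    · subst hij
      rw [Pi.single_eq_same, Pi.single_eq_same, nsmul_eq_mul, mul_one]
      exact ZMod.natCast_rightInverse (a j)
    · rw [Pi.single_eq_of_ne hij, Pi.single_eq_of_ne hij, smul_zero]
  simp_rw [h2]
  exact Finset.univ_sum_single a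

lemma two_smul_zmod2 {M : Type*} [AddCommGroup M] [Module (ZMod 2) M] (x : M) : x + x = 0 := by
  have h : ((1 : ZMod 2) + 1) • x = (0 : ZMod 2) • x := by
    have : (1 : ZMod 2) + 1 = 0 := by decide
    rw [this]
  rw [add_smul, one_smul, zero_smul] at h
  exact h

lemma phiC_codeIdeal {K : Type*} [Field K] {n : ℕ} (C : Submodule (ZMod 2) (Fin n → ZMod 2))
    {x : MvPolynomial (Fin n) K} (hx : x ∈ codeIdeal K C) : phiC K C x = 0 := by
  have hle : codeIdeal K C ≤ RingHom.ker (phiC K C).toRingHom := by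
    rw [codeIdeal, Ideal.span_le]
    rintro f (⟨c, c', hcc', rfl⟩ | ⟨i, rfl⟩) <;>
      simp only [SetLike.mem_coe, RingHom.mem_ker, AlgHom.toRingHom_eq_coe, RingHom.coe_coe,
        map_sub, map_pow, map_one]
    · rw [phiC_Xw, phiC_Xw, (Submodule.Quotient.eq C).mpr hcc', sub_self]
    · have hX : phiC K C (X i) =
          AddMonoidAlgebra.single (Submodule.Quotient.mk (Pi.single i (1 : ZMod 2))) 1 := by
        rw [phiC, aeval_X]
      rw [hX, AddMonoidAlgebra.single_pow, one_pow, two_nsmul, two_smul_zmod2,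
        ← AddMonoidAlgebra.one_def, sub_self]
  exact hle hx

lemma mem_code_of_codeIdeal {K : Type*} [Field K] {n : ℕ}
    (C : Submodule (ZMod 2) (Fin n → ZMod 2)) {a b : Fin n → ZMod 2}
    (h : Xw K a - Xw K b ∈ codeIdeal K C) : a - b ∈ C := by
  have h0 := phiC_codeIdeal C h
  rw [map_sub, phiC_Xw, phiC_Xw, sub_eq_zero] at h0
  have := AddMonoidAlgebra.single_inj.mp h0
  rcases this with ⟨hq, -⟩ | ⟨h1, -⟩
  · exact (Submodule.Quotient.eq C).mp hq
  · exact absurd h1 one_ne_zero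


lemma leadExp_binomial {K : Type*} [Field K] {n : ℕ} {a b : Fin n →₀ ℕ}
    (h : toLex b < toLex a) :
    leadExp MonomialOrder.lex (monomial a (1 : K) - monomial b 1) = a := by
  classical
  have hab : b ≠ a := fun hEq => by rw [hEq] at h; exact lt_irrefl _ h
  set f := monomial a (1 : K) - monomial b 1 with hf
  have hfa : f.coeff a = 1 := by
    rw [hf, coeff_sub, coeff_monomial, coeff_monomial, if_pos rfl, if_neg hab, sub_zero]
  have ha : a ∈ f.support := by rw [mem_support_iff, hfa]; exact one_ne_zero
  have hsub : f.support ⊆ {a, b} := by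
    intro c hc
    rw [mem_support_iff] at hc
    by_contra hcc
    simp only [Finset.mem_insert, Finset.mem_singleton, not_or] at hcc
    apply hc
    rw [hf, coeff_sub, coeff_monomial, coeff_monomial, if_neg (Ne.symm hcc.1),
      if_neg (Ne.symm hcc.2), sub_zero]
  have key : (f.support.sup fun d => (MonomialOrder.lex (σ := Fin n)).toSyn d)
      = (MonomialOrder.lex (σ := Fin n)).toSyn a := by
    apply le_antisymm
    · apply Finset.sup_le
      intro c hc
      rcases Finset.mem_insert.mp (hsub hc) with rfl | hcb
      · exact le_refl _
      · rw [Finset.mem_singleton] at hcb; subst hcb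
        exact le_of_lt h
    · exact Finset.le_sup ha
  rw [leadExp, key]
  exact (MonomialOrder.lex (σ := Fin n)).toSyn.symm_apply_apply a

lemma code_eq_zero_of_info {n k : ℕ} (hk : k ≤ n) {C : Submodule (ZMod 2) (Fin n → ZMod 2)}
    {g : Fin k → Fin n → ZMod 2} (hg : IsStandardGenMatrix hk C g)
    {x : Fin n → ZMod 2} (hx : x ∈ C) (h0 : ∀ j : Fin n, (j : ℕ) < k → x j = 0) : x = 0 := by
  rw [hg.1, Submodule.mem_span_range_iff_exists_fun] at hx
  obtain ⟨f, hfx⟩ := hx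
  have hf : ∀ j : Fin k, f j = 0 := by
    intro j
    have hsum : (∑ i, f i • g i) (Fin.castLE hk j) = f j := by
      rw [Finset.sum_apply]
      have : ∀ i : Fin k, (f i • g i) (Fin.castLE hk j) = if i = j then f i else 0 := by
        intro i
        rw [Pi.smul_apply, hg.2 i j, smul_eq_mul]
        split <;> simp
      simp_rw [this]
      exact Finset.sum_ite_eq' Finset.univ j f ▸ by simp
    have hxj : x (Fin.castLE hk j) = 0 := h0 (Fin.castLE hk j) (by simpa using j.isLt)
    rw [hfx, hxj] at hsum
    exact hsum.symm
  have : ∀ i, f i • g i = 0 := fun i => by rw [hf i, zero_smul]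
  rw [← hfx]
  simp [this]

/-- with `C` a `t`-error-correcting binary `[n,k,d]` code and `v` a received
word at distance `≤ t` from the codeword `c`, the remainder `X^e − 1` of `X^v − 1` on
division by the standard-form reduced Groebner basis has weight `w(e) > t` iff some
nonzero coordinate of the error vector `v − c` lies among the first `k` coordinates. -/
theorem high_weight_remainder_iff_error_in_info_part (K : Type*) [Field K]
    {n k : ℕ} (hk : k ≤ n)
    (C : Submodule (ZMod 2) (Fin n → ZMod 2)) (g : Fin k → Fin n → ZMod 2)
    (hg : IsStandardGenMatrix hk C g) (d t : ℕ)
    (hd : ∀ x ∈ C, x ≠ 0 → d ≤ hammingNorm x) (ht : 2 * t + 1 ≤ d)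
    (v : Fin n → ZMod 2) (c : Fin n → ZMod 2) (hc : c ∈ C)
    (hvc : hammingDist v c ≤ t)
    (e : Fin n → ZMod 2)
    (hrem : IsRemainder MonomialOrder.lex (codeIdeal K C) (gbSet K hk g)
      (Xw K v - 1) (Xw K e - 1)) :
    t < hammingNorm e ↔ ∃ j : Fin n, (j : ℕ) < k ∧ (v - c) j ≠ 0 := by
  classical
  -- e vanishes on the first k coordinates
  have he0 : ∀ j : Fin n, (j : ℕ) < k → e j = 0 := by
    intro j hj
    by_contra hne
    have hval : (e j).val ≠ 0 := fun h => hne ((ZMod.val_eq_zero _).mp h)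
    have hexp : expOf e ≠ 0 := by
      intro h
      apply hval
      have := DFunLike.congr_fun h j
      simpa [expOf] using this
    have hmemsup : expOf e ∈ (Xw K e - 1).support := by
      rw [MvPolynomial.mem_support_iff, coeff_sub, Xw, coeff_monomial, if_pos rfl,
        coeff_one, if_neg (fun h => hexp h.symm), sub_zero]
      exact one_ne_zero
    set i : Fin k := ⟨(j : ℕ), hj⟩ with hi
    have hcast : Fin.castLE hk i = j := Fin.ext rfl
    have hge_mem : (X (Fin.castLE hk i) - Xw K (mrow g i)) ∈ gbSet K hk g :=
      Or.inl ⟨i, rfl⟩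
    have hlt : toLex (expOf (mrow g i)) < toLex (Finsupp.single (Fin.castLE hk i) 1) := by
      rw [Finsupp.Lex.lt_iff]
      refine ⟨Fin.castLE hk i, ?_, ?_⟩
      · intro j' hj'
        have hj'k : (j' : ℕ) < k := by
          have : (j' : ℕ) < (Fin.castLE hk i : ℕ) := hj'
          omega
        show expOf (mrow g i) j' = (Finsupp.single (Fin.castLE hk i) 1) j'
        rw [Finsupp.single_apply, if_neg (by intro hEq; subst hEq; exact lt_irrefl _ hj')]
        simp [expOf, mrow, hj'k]
      · show expOf (mrow g i) (Fin.castLE hk i) < (Finsupp.single (Fin.castLE hk i) 1)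
          (Fin.castLE hk i)
        rw [Finsupp.single_eq_same]
        have : mrow g i (Fin.castLE hk i) = 0 := by
          simp [mrow, hcast, hj]
        simp [expOf, this]
    have hne' : (Finsupp.single (Fin.castLE hk i) 1 : Fin n →₀ ℕ) ≠ expOf (mrow g i) :=
      fun hEq => by rw [hEq] at hlt; exact lt_irrefl _ hlt
    have hlead : leadExp MonomialOrder.lex (X (Fin.castLE hk i) - Xw K (mrow g i))
        = Finsupp.single (Fin.castLE hk i) 1 := by
      have hX : (X (Fin.castLE hk i) : MvPolynomial (Fin n) K)
          = monomial (Finsupp.single (Fin.castLE hk i) 1) 1 := rfl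
      rw [hX, Xw]
      exact leadExp_binomial hlt
    have hne0 : (X (Fin.castLE hk i) - Xw K (mrow g i)) ≠ (0 : MvPolynomial (Fin n) K) := by
      rw [sub_ne_zero]
      intro hEq
      rw [show (X (Fin.castLE hk i) : MvPolynomial (Fin n) K)
          = monomial (Finsupp.single (Fin.castLE hk i) 1) 1 from rfl, Xw,
        monomial_eq_monomial_iff] at hEq
      rcases hEq with ⟨h1, -⟩ | ⟨h1, -⟩
      · exact hne' h1
      · exact one_ne_zero h1
    have hnd := hrem.2 (expOf e) hmemsup _ hge_mem hne0
    rw [hlead] at hnd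
    apply hnd
    rw [Finsupp.single_le_iff]
    have : expOf e (Fin.castLE hk i) = (e j).val := by rw [hcast]; rfl
    omega
  -- v - e is a codeword
  have hve : v - e ∈ C := by
    have h' : Xw K v - Xw K e ∈ codeIdeal K C := by
      have heq : (Xw K v - 1) - (Xw K e - 1) = Xw K v - Xw K e := by ring
      have := hrem.1
      rwa [heq] at this
    exact mem_code_of_codeIdeal C h'
  set ε := v - c with hε
  have hεt : hammingNorm ε ≤ t := by
    rw [hε, sub_eq_neg_add, ← hammingDist_eq_hammingNorm, hammingDist_comm]; exact hvc
  have heε : e - ε ∈ C := by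
    have h1 : e - ε = c - (v - e) := by rw [hε]; abel
    rw [h1]
    exact Submodule.sub_mem C hc hve
  constructor
  · intro hwt
    by_contra hno
    push_neg at hno
    have hz : ∀ j : Fin n, (j : ℕ) < k → (e - ε) j = 0 := fun j hj => by
      rw [Pi.sub_apply, he0 j hj, hno j hj, sub_zero]
    have h0 : e - ε = 0 := code_eq_zero_of_info hk hg heε hz
    have he : e = ε := sub_eq_zero.mp h0
    rw [he] at hwt
    omega
  · rintro ⟨j, hjk, hεj⟩
    by_contra hwt
    push_neg at hwt
    have hne : e - ε ≠ 0 := by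
      intro h0
      have := congrFun h0 j
      rw [Pi.sub_apply, he0 j hjk, zero_sub, Pi.zero_apply, neg_eq_zero] at this
      exact hεj this
    have hd' := hd _ heε hne
    have htri : hammingNorm (e - ε) ≤ hammingNorm e + hammingNorm ε := by
      rw [sub_eq_neg_add, ← hammingDist_eq_hammingNorm, hammingDist_comm]
      calc hammingDist e ε ≤ hammingDist e 0 + hammingDist 0 ε := hammingDist_triangle _ _ _
        _ = hammingNorm e + hammingNorm ε := by
            rw [hammingDist_zero_right, hammingDist_zero_left]
    omega
end

section
/- One-error-correcting decoding: let C be a binary [n,k]-code with minimum distance ≥ 3, G the standard-form reduced Groebner basis of its code ideal, and u ∈ F_2^n a word at Hamming distance ≤ 1 from some codeword. If the remainder of X^u − 1 by G has weight > 1, then there exists i with 1 ≤ i ≤ k such that the remainder of X^u − 1 equals the remainder of X^{e_i} − 1 (e_i the i-th standard basis vector), and u + e_i ∈ C is the codeword closest to u. -/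
open MvPolynomial
open scoped MonomialOrder

/-! ### Auxiliary lemmas -/

section Aux

variable {K : Type*} [Field K] {n : ℕ}

lemma zmod2_eq_one {x : ZMod 2} (h : x ≠ 0) : x = 1 := by revert h; revert x; decide

lemma neg_word (x : Fin n → ZMod 2) : -x = x := funext fun _ => CharTwo.neg_eq _

lemma expOf_apply (c : Fin n → ZMod 2) (i : Fin n) : expOf c i = (c i).val := rfl

lemma expOf_eq_zero {c : Fin n → ZMod 2} (h : expOf c = 0) : c = 0 := by
  funext i
  have h' : expOf c i = 0 := by rw [h]; rfl
  rw [expOf_apply] at h'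
  exact (ZMod.val_eq_zero _).mp h'

/-- The evaluation map to the group algebra of the quotient group. -/
noncomputable def phiM (K : Type*) [Field K] {n : ℕ}
    (C : Submodule (ZMod 2) (Fin n → ZMod 2)) :
    MvPolynomial (Fin n) K →ₐ[K] AddMonoidAlgebra K ((Fin n → ZMod 2) ⧸ C) :=
  aeval fun i => AddMonoidAlgebra.single (Submodule.Quotient.mk (Pi.single i 1)) 1

lemma phiM_Xw (C : Submodule (ZMod 2) (Fin n → ZMod 2)) (a : Fin n → ZMod 2) :
    phiM K C (Xw K a) = AddMonoidAlgebra.single (Submodule.Quotient.mk a) 1 := by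
  rw [Xw, phiM, aeval_monomial, map_one, one_mul, Finsupp.prod]
  simp only [AddMonoidAlgebra.single_pow, one_pow]
  rw [AddMonoidAlgebra.prod_single, Finset.prod_const_one]
  congr 1
  rw [Finset.sum_subset (Finset.subset_univ (expOf a).support)
    (fun x _ hx => by rw [Finsupp.notMem_support_iff.mp hx, zero_smul])]
  let q : (Fin n → ZMod 2) →+ (Fin n → ZMod 2) ⧸ C := (Submodule.mkQ C).toAddMonoidHom
  show ∑ i : Fin n, expOf a i • q (Pi.single i 1) = q a
  have h1 : ∀ i : Fin n, expOf a i • q (Pi.single i 1) = q (expOf a i • Pi.single i 1) :=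
    fun i => (q.map_nsmul _ _).symm
  rw [Finset.sum_congr rfl fun i _ => h1 i, ← map_sum q]
  congr 1
  have h3 : ∀ i : Fin n,
      expOf a i • (Pi.single i (1 : ZMod 2) : Fin n → ZMod 2) = Pi.single i (a i) := by
    intro i
    rw [← Pi.single_smul, expOf_apply, nsmul_eq_mul, mul_one]
    simp [ZMod.natCast_val, ZMod.cast_id]
  rw [Finset.sum_congr rfl fun i _ => h3 i, Finset.univ_sum_single]

lemma codeIdeal_le_ker (C : Submodule (ZMod 2) (Fin n → ZMod 2)) :
    codeIdeal K C ≤ RingHom.ker (phiM K C).toRingHom := by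
  rw [codeIdeal, Ideal.span_le]
  rintro f (⟨c, c', hcc, rfl⟩ | ⟨i, rfl⟩) <;>
    simp only [SetLike.mem_coe, RingHom.mem_ker, AlgHom.toRingHom_eq_coe,
      RingHom.coe_coe, map_sub, map_pow, map_one, sub_eq_zero]
  · rw [phiM_Xw, phiM_Xw, (Submodule.Quotient.eq C).mpr hcc]
  · rw [phiM, aeval_X, AddMonoidAlgebra.single_pow, one_pow]
    have h4 : (Pi.single i (1 : ZMod 2) : Fin n → ZMod 2) + Pi.single i 1 = 0 :=
      _root_.funext fun j => CharTwo.add_self_eq_zero _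
    have h5 : (2 : ℕ) • (Submodule.Quotient.mk (Pi.single i 1) : (Fin n → ZMod 2) ⧸ C)
        = 0 := by
      rw [two_nsmul, ← Submodule.Quotient.mk_add, h4, Submodule.Quotient.mk_zero]
    rw [h5, AddMonoidAlgebra.one_def]

lemma sub_mem_code {C : Submodule (ZMod 2) (Fin n → ZMod 2)} {a b : Fin n → ZMod 2}
    (h : Xw K a - Xw K b ∈ codeIdeal K C) : a - b ∈ C := by
  have h2 := codeIdeal_le_ker (K := K) C h
  rw [RingHom.mem_ker, AlgHom.toRingHom_eq_coe, RingHom.coe_coe, map_sub,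
    phiM_Xw, phiM_Xw, sub_eq_zero] at h2
  rcases AddMonoidAlgebra.single_inj.mp h2 with ⟨h3, -⟩ | ⟨h3, -⟩
  · exact (Submodule.Quotient.eq C).mp h3
  · exact absurd h3 one_ne_zero

lemma code_low_zero {k : ℕ} (hk : k ≤ n) {C : Submodule (ZMod 2) (Fin n → ZMod 2)}
    {g : Fin k → Fin n → ZMod 2} (hg : IsStandardGenMatrix hk C g)
    {x : Fin n → ZMod 2} (hx : x ∈ C) (h0 : ∀ j : Fin n, (j : ℕ) < k → x j = 0) :
    x = 0 := by
  rw [hg.1] at hx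
  obtain ⟨c, hc⟩ := (Submodule.mem_span_range_iff_exists_fun _).mp hx
  have hcz : ∀ i : Fin k, c i = 0 := by
    intro i
    have h1 := congrFun hc (Fin.castLE hk i)
    rw [Finset.sum_apply] at h1
    have h2 : ∀ i' : Fin k, (c i' • g i') (Fin.castLE hk i)
        = if i' = i then c i' else 0 := by
      intro i'
      rw [Pi.smul_apply, hg.2 i' i, smul_eq_mul]
      split <;> simp
    rw [Finset.sum_congr rfl (fun i' _ => h2 i'), Finset.sum_ite_eq' Finset.univ i c,
      if_pos (Finset.mem_univ i)] at h1
    rw [h1]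
    exact h0 _ (by rw [Fin.coe_castLE]; exact i.isLt)
  rw [← hc]
  simp [hcz]

lemma word_norm_le_one {x : Fin n → ZMod 2} (h : hammingNorm x ≤ 1) :
    x = 0 ∨ ∃ j : Fin n, x = fun j' => if j' = j then 1 else 0 := by
  rcases Nat.le_one_iff_eq_zero_or_eq_one.mp h with h1 | h1
  · exact Or.inl (hammingNorm_eq_zero.mp h1)
  · right
    obtain ⟨j, hj⟩ := Finset.card_eq_one.mp h1
    refine ⟨j, funext fun j' => ?_⟩
    by_cases hj' : x j' = 0
    · have : j' ∉ ({j} : Finset (Fin n)) := by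
        rw [← hj, Finset.mem_filter]
        exact fun hmem => hmem.2 hj'
      rw [Finset.mem_singleton] at this
      rw [hj', if_neg this]
    · have : j' ∈ ({j} : Finset (Fin n)) := by
        rw [← hj, Finset.mem_filter]
        exact ⟨Finset.mem_univ _, hj'⟩
      rw [Finset.mem_singleton] at this
      rw [zmod2_eq_one hj', if_pos this]

lemma norm_delta (j : Fin n) :
    hammingNorm (fun j' => if j' = j then (1 : ZMod 2) else 0) = 1 := by
  have : (Finset.univ.filter fun j' : Fin n =>
      (if j' = j then (1 : ZMod 2) else 0) ≠ 0) = {j} := by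
    ext j'
    simp only [Finset.mem_filter, Finset.mem_univ, true_and, Finset.mem_singleton]
    split <;> simp_all
  show (Finset.univ.filter _).card = 1
  rw [this, Finset.card_singleton]

lemma leadExp_row {k : ℕ} (hk : k ≤ n) (g : Fin k → Fin n → ZMod 2) (i : Fin k) :
    leadExp MonomialOrder.lex (X (Fin.castLE hk i) - Xw K (mrow g i))
      = Finsupp.single (Fin.castLE hk i) 1 := by
  set a : Fin n := Fin.castLE hk i with ha
  set d1 : Fin n →₀ ℕ := Finsupp.single a 1 with hd1
  set d2 : Fin n →₀ ℕ := expOf (mrow g i) with hd2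
  set f : MvPolynomial (Fin n) K := X a - Xw K (mrow g i) with hf
  have hlowm : ∀ j : Fin n, (j : ℕ) < k → d2 j = 0 := by
    intro j hj
    rw [hd2, expOf_apply, mrow, if_pos hj]
    rfl
  have hak : (a : ℕ) < k := by rw [ha, Fin.coe_castLE]; exact i.isLt
  have hne : d2 ≠ d1 := by
    intro h
    have h2 := DFunLike.congr_fun h a
    rw [hlowm a hak, hd1, Finsupp.single_eq_same] at h2
    exact Nat.zero_ne_one h2
  have hXa : (X a : MvPolynomial (Fin n) K) = monomial d1 1 := rfl
  have hcoeff : ∀ d : Fin n →₀ ℕ, f.coeff d = (if d1 = d then 1 else 0)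
      - (if d2 = d then 1 else 0) := by
    intro d
    rw [hf, coeff_sub, hXa, Xw, coeff_monomial, coeff_monomial]
  have hmem1 : d1 ∈ f.support := by
    rw [mem_support_iff, hcoeff, if_pos rfl, if_neg hne]
    norm_num
  have hsub : f.support ⊆ {d1, d2} := by
    intro d hd
    rw [mem_support_iff, hcoeff] at hd
    by_contra hcon
    simp only [Finset.mem_insert, Finset.mem_singleton, not_or] at hcon
    rw [if_neg (Ne.symm hcon.1), if_neg (Ne.symm hcon.2), sub_zero] at hd
    exact hd rfl
  have hlt : MonomialOrder.lex.toSyn d2 < MonomialOrder.lex.toSyn d1 := by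
    show toLex d2 < toLex d1
    rw [Finsupp.Lex.lt_iff]
    refine ⟨a, fun j hj => ?_, ?_⟩
    · have hjk : (j : ℕ) < k := (Fin.lt_def.mp hj).trans hak
      rw [ofLex_toLex, ofLex_toLex, hlowm j hjk, hd1,
        Finsupp.single_apply, if_neg (ne_of_gt hj)]
    · rw [ofLex_toLex, ofLex_toLex, hlowm a hak, hd1, Finsupp.single_eq_same]
      exact Nat.zero_lt_one
  have hsup : f.support.sup (fun d => MonomialOrder.lex.toSyn d)
      = MonomialOrder.lex.toSyn d1 := by
    apply le_antisymm
    · apply Finset.sup_le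
      intro d hd
      rcases Finset.mem_insert.mp (hsub hd) with rfl | hd2'
      · exact le_refl _
      · rw [Finset.mem_singleton] at hd2'
        subst hd2'
        exact hlt.le
    · exact Finset.le_sup hmem1
  unfold leadExp
  rw [hsup]
  exact AddEquiv.symm_apply_apply _ _

end Aux

/-- one-error-correcting decoding. Let `C` be a binary `[n,k]` code of
minimum distance `≥ 3` with standard-form reduced Groebner basis, and `u` a word at
distance `≤ 1` from some codeword. If the remainder `X^e − 1` of `X^u − 1` on division
by the basis has weight `> 1`, then there is `i ≤ k` such that `X^{e_i} − 1` has the same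
remainder, and `u + e_i ∈ C` is the codeword closest to `u`. -/
theorem one_error_decoding (K : Type*) [Field K] {n k : ℕ} (hk : k ≤ n)
    (C : Submodule (ZMod 2) (Fin n → ZMod 2)) (g : Fin k → Fin n → ZMod 2)
    (hg : IsStandardGenMatrix hk C g)
    (hd : ∀ x ∈ C, x ≠ 0 → 3 ≤ hammingNorm x)
    (u : Fin n → ZMod 2) (hu : ∃ c ∈ C, hammingDist u c ≤ 1)
    (e : Fin n → ZMod 2)
    (hrem : IsRemainder MonomialOrder.lex (codeIdeal K C) (gbSet K hk g)
      (Xw K u - 1) (Xw K e - 1))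
    (hw : 1 < hammingNorm e) :
    ∃ i : Fin k,
      IsRemainder MonomialOrder.lex (codeIdeal K C) (gbSet K hk g)
        (Xw K (fun j => if j = Fin.castLE hk i then 1 else 0) - 1) (Xw K e - 1) ∧
      (u + fun j => if j = Fin.castLE hk i then 1 else 0) ∈ C ∧
      ∀ c' ∈ C, hammingDist u (u + fun j => if j = Fin.castLE hk i then 1 else 0)
        ≤ hammingDist u c' := by
  classical
  have hene : e ≠ 0 := by
    intro h
    rw [h, hammingNorm_eq_zero.mpr rfl] at hw
    exact absurd hw (by omega)
  have hexp_ne : expOf e ≠ 0 := fun h => hene (expOf_eq_zero h)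
  have hmem : expOf e ∈ (Xw K e - 1).support := by
    rw [mem_support_iff, coeff_sub, Xw, coeff_monomial, if_pos rfl, coeff_one,
      if_neg (Ne.symm hexp_ne), sub_zero]
    exact one_ne_zero
  -- e vanishes on the first k coordinates
  have hlow : ∀ j : Fin n, (j : ℕ) < k → e j = 0 := by
    intro j hj
    set i : Fin k := ⟨(j : ℕ), hj⟩ with hi
    have hcast : Fin.castLE hk i = j := Fin.ext rfl
    have hGg : (X (Fin.castLE hk i) - Xw K (mrow g i)) ∈ gbSet K hk g :=
      Or.inl ⟨i, rfl⟩
    have hne0 : (X (Fin.castLE hk i) - Xw K (mrow g i) : MvPolynomial (Fin n) K) ≠ 0 := by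
      intro h
      have h2 : (X (Fin.castLE hk i) - Xw K (mrow g i) : MvPolynomial (Fin n) K).coeff
          (Finsupp.single (Fin.castLE hk i) 1) = 1 := by
        rw [coeff_sub, show (X (Fin.castLE hk i) : MvPolynomial (Fin n) K)
            = monomial (Finsupp.single (Fin.castLE hk i) 1) 1 from rfl,
          Xw, coeff_monomial, coeff_monomial, if_pos rfl]
        rw [if_neg, sub_zero]
        intro hcon
        have h3 := DFunLike.congr_fun hcon (Fin.castLE hk i)
        rw [Finsupp.single_eq_same, expOf_apply, mrow] at h3
        rw [if_pos (by rw [Fin.coe_castLE]; exact i.isLt)] at h3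
        exact absurd h3.symm (by simp [ZMod.val_zero])
      rw [h, coeff_zero] at h2
      exact zero_ne_one h2
    have hnot := hrem.2 _ hmem _ hGg hne0
    rw [leadExp_row hk g i] at hnot
    by_contra hcon
    apply hnot
    rw [Finsupp.single_le_iff, expOf_apply, hcast]
    have : e j = 1 := zmod2_eq_one hcon
    rw [this]
    exact le_refl 1
  have hue : u - e ∈ C := by
    have h := hrem.1
    rw [sub_sub_sub_cancel_right] at h
    exact sub_mem_code h
  have hUnotinC : u ∉ C := by
    intro hu'
    have h1 : e ∈ C := by
      have := C.sub_mem hu' hue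
      rwa [sub_sub_cancel] at this
    exact hene (code_low_zero hk hg h1 hlow)
  obtain ⟨c0, hc0, hdist⟩ := hu
  have herr : hammingNorm (u - c0) ≤ 1 := by
    rwa [hammingDist_comm, hammingDist_eq_hammingNorm, neg_add_eq_sub] at hdist
  rcases word_norm_le_one herr with h0 | ⟨j, hj⟩
  · exact absurd ((sub_eq_zero.mp h0) ▸ hc0) hUnotinC
  · have hδC : ((fun j' => if j' = j then (1 : ZMod 2) else 0) - e : Fin n → ZMod 2) ∈ C := by
      have h1 : (u - e) - c0 ∈ C := C.sub_mem hue hc0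
      have h2 : (u - e) - c0 = (u - c0) - e := by abel
      rw [h2, hj] at h1
      exact h1
    by_cases hjk : (j : ℕ) < k
    · refine ⟨⟨(j : ℕ), hjk⟩, ?_⟩
      have hcast : Fin.castLE hk (⟨(j : ℕ), hjk⟩ : Fin k) = j := Fin.ext rfl
      rw [hcast]
      have hkey : ∀ x y z : ZMod 2, (x - z) + (y - z) = x + y := by decide
      refine ⟨⟨?_, hrem.2⟩, ?_, ?_⟩
      · rw [sub_sub_sub_cancel_right]
        exact Ideal.subset_span (Or.inl ⟨_, e, hδC, rfl⟩)
      · have hsum : (u + fun j' => if j' = j then (1 : ZMod 2) else 0)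
            = (u - e) + ((fun j' => if j' = j then (1 : ZMod 2) else 0) - e) :=
          _root_.funext fun j' => (hkey _ _ _).symm
        rw [hsum]
        exact C.add_mem hue hδC
      · intro c' hc'
        have hd1 : hammingDist u (u + fun j' => if j' = j then (1 : ZMod 2) else 0) = 1 := by
          rw [hammingDist_eq_hammingNorm, neg_add_cancel_left, norm_delta]
        rw [hd1]
        by_contra hcon
        have : hammingDist u c' = 0 := by omega
        exact hUnotinC (hammingDist_eq_zero.mp this ▸ hc')
    · exfalso
      have hz : ((fun j' => if j' = j then (1 : ZMod 2) else 0) - e : Fin n → ZMod 2) = 0 := by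
        apply code_low_zero hk hg hδC
        intro j' hj'
        have hnej : j' ≠ j := by
          intro h
          exact hjk (h ▸ hj')
        simp [hnej, hlow j' hj']
      have he : e = fun j' => if j' = j then (1 : ZMod 2) else 0 :=
        (sub_eq_zero.mp hz).symm
      rw [he, norm_delta] at hw
      exact absurd hw (by omega)
end
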